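/- Let P ∈ PolyStrNNeg, let P₁ be the sum of the maximal monomials of P, and let P₂ := P − P₁. Then there exists K ∈ ℕ such that Δ_K(P₁) + τ_K(P₂) has all coefficients non-negative, i.e., belongs to ℕ[X₁,…,X_k]. -/

import Mathlib

open scoped BigOperators Classical

namespace NRatSeries

/-- All ways to split a word into a prefix and a suffix. -/
def splits {A : Type} (w : List A) : List (List A × List A) :=
  (List.range (w.length + 1)).map (fun i => (w.take i, w.drop i))

/-- All decompositions of `w` into `n` (possibly empty) consecutive factors. -/
def decomps {A : Type} : ℕ → List A → List (List (List A))
  | 0, w => if w.isEmpty then [[]] else []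
  | n+1, w => (splits w).flatMap (fun p => (decomps n p.2).map (fun l => p.1 :: l))

/-- The data defining a (ℤ-valued) polyregular computation of degree `d`:
a finite monoid `M`, a monoid morphism `μ` from words to `M`,
and a production function `π`. -/
structure PolyRegData (A : Type) (d : ℕ) where
  M : Type
  [mon : Monoid M]
  [fin : Fintype M]
  μ : List A → M
  π : (Fin (d + 1) → M) → ℤ
  map_nil : μ [] = 1
  map_append : ∀ u v : List A, μ (u ++ v) = μ u * μ v

attribute [instance] PolyRegData.mon PolyRegData.fin

/-- `D` computes `f` if `f w` is the sum, over all decompositions of `w`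
into `d+1` factors, of `π` applied to the images of the factors under `μ`. -/
def PolyRegData.Computes {A : Type} {d : ℕ} (D : PolyRegData A d) (f : List A → ℤ) : Prop :=
  ∀ w : List A,
    f w = ((decomps (d + 1) w).map (fun l => D.π (fun i => D.μ (l.getD i [])))).sum

/-- The production function takes values in ℕ. -/
def PolyRegData.NatOutput {A : Type} {d : ℕ} (D : PolyRegData A d) : Prop :=
  ∀ v, 0 ≤ D.π v

/-- The monoid is aperiodic. -/
def PolyRegData.AperiodicMonoid {A : Type} {d : ℕ} (D : PolyRegData A d) : Prop :=
  ∀ x : D.M, ∃ n : ℕ, x ^ (n + 1) = x ^ n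

/-- ℤ-polyregular of degree at most `d`. -/
def ZPolyD {A : Type} (d : ℕ) (f : List A → ℤ) : Prop :=
  ∃ D : PolyRegData A d, D.Computes f

/-- ℕ-polyregular of degree at most `d`. -/
def NPolyD {A : Type} (d : ℕ) (f : List A → ℤ) : Prop :=
  ∃ D : PolyRegData A d, D.Computes f ∧ D.NatOutput

/-- star-free ℤ-polyregular of degree at most `d`. -/
def ZSFD {A : Type} (d : ℕ) (f : List A → ℤ) : Prop :=
  ∃ D : PolyRegData A d, D.Computes f ∧ D.AperiodicMonoid

/-- star-free ℕ-polyregular of degree at most `d`. -/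
def NSFD {A : Type} (d : ℕ) (f : List A → ℤ) : Prop :=
  ∃ D : PolyRegData A d, D.Computes f ∧ D.NatOutput ∧ D.AperiodicMonoid

def ZPoly {A : Type} (f : List A → ℤ) : Prop := ∃ d, ZPolyD d f
def NPoly {A : Type} (f : List A → ℤ) : Prop := ∃ d, NPolyD d f
def ZSF {A : Type} (f : List A → ℤ) : Prop := ∃ d, ZSFD d f
def NSF {A : Type} (f : List A → ℤ) : Prop := ∃ d, NSFD d f

/-- A function on words is commutative if it is invariant under permutations
of its input, i.e. only depends on the letter counts. -/
def Commutes {A : Type} (f : List A → ℤ) : Prop :=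
  ∀ u v : List A, u.Perm v → f u = f v

/-- The word `η 0 ^ (x 0) ⋯ η (k-1) ^ (x (k-1))`. -/
def wordOf {A : Type} {k : ℕ} (η : Fin k → A) (x : Fin k → ℕ) : List A :=
  (List.finRange k).flatMap (fun i => List.replicate (x i) (η i))

/-- `g` represents the polynomial `P`. -/
def Represents {A : Type} {k : ℕ} (g : List A → ℤ) (P : MvPolynomial (Fin k) ℤ) : Prop :=
  ∃ η : Fin k → A, ∀ x : Fin k → ℕ,
    g (wordOf η x) = MvPolynomial.eval (fun i => (x i : ℤ)) P

/-- `g` represents the rational polynomial `P`. -/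
def RepresentsQ {A : Type} {k : ℕ} (g : List A → ℤ) (P : MvPolynomial (Fin k) ℚ) : Prop :=
  ∃ η : Fin k → A, ∀ x : Fin k → ℕ,
    (g (wordOf η x) : ℚ) = MvPolynomial.eval (fun i => (x i : ℚ)) P

/-- `α` is (the exponent vector of) a maximal monomial of `P` for the
divisibility preorder on monomials. -/
def MaxMonomial {k : ℕ} (P : MvPolynomial (Fin k) ℤ) (α : Fin k →₀ ℕ) : Prop :=
  α ∈ P.support ∧ ∀ β ∈ P.support, α ≤ β → β = α

/-- Partial substitution of natural numbers for some of the variables. -/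
noncomputable def restrict {k : ℕ} (ν : Fin k → Option ℕ) (P : MvPolynomial (Fin k) ℤ) :
    MvPolynomial (Fin k) ℤ :=
  MvPolynomial.bind₁
    (fun i => (ν i).elim (MvPolynomial.X i) (fun n => MvPolynomial.C (n : ℤ))) P

noncomputable def restrictQ {k : ℕ} (ν : Fin k → Option ℕ) (P : MvPolynomial (Fin k) ℚ) :
    MvPolynomial (Fin k) ℚ :=
  MvPolynomial.bind₁
    (fun i => (ν i).elim (MvPolynomial.X i) (fun n => MvPolynomial.C (n : ℚ))) P

/-- `PolyStrNNeg`: every maximal monomial of every partial evaluation of `P`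
at natural numbers has a non-negative coefficient. -/
def PolyStrNNeg {k : ℕ} (P : MvPolynomial (Fin k) ℤ) : Prop :=
  ∀ (ν : Fin k → Option ℕ) (α : Fin k →₀ ℕ),
    MaxMonomial (restrict ν P) α → 0 ≤ (restrict ν P).coeff α

/-- The translation `τ_K(P) = P(X₁ + K, …, X_k + K)`. -/
noncomputable def translate {k : ℕ} (K : ℕ) (P : MvPolynomial (Fin k) ℤ) :
    MvPolynomial (Fin k) ℤ :=
  MvPolynomial.bind₁ (fun i => MvPolynomial.X i + MvPolynomial.C (K : ℤ)) P

/-- The discrete derivative `Δ_K(P) = τ_K(P) - P`. -/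
noncomputable def delta {k : ℕ} (K : ℕ) (P : MvPolynomial (Fin k) ℤ) :
    MvPolynomial (Fin k) ℤ := translate K P - P

/-- `u ^ n` as concatenation. -/
def wpow {A : Type} (u : List A) (n : ℕ) : List A := (List.replicate n u).flatten

/-- A pumping pattern `q(x₁,…,x_p) = α₀ u₁^{x₁} α₁ ⋯ u_p^{x_p} α_p`. -/
def IsPumping {A : Type} {p : ℕ} (q : (Fin p → ℕ) → List A) : Prop :=
  ∃ (α : Fin (p + 1) → List A) (u : Fin p → List A),
    ∀ x : Fin p → ℕ,
      q x = α 0 ++ ((List.finRange p).map (fun i => wpow (u i) (x i) ++ α i.succ)).flatten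

/-- A natural binomial function: an ℕ-linear combination of products of
simple binomial functions `x ↦ binom (x - ℓ) k` (with truncated subtraction). -/
def IsNatBinomFun {p : ℕ} (F : (Fin p → ℕ) → ℕ) : Prop :=
  ∃ (n : ℕ) (c : Fin n → ℕ) (a b : Fin n → Fin p → ℕ),
    ∀ x : Fin p → ℕ, F x = ∑ i, c i * ∏ j, Nat.choose (x j - a i j) (b i j)

/-- The binomial monomial `pbinom (X_j - ℓ, m) = (X_j-ℓ)(X_j-ℓ-1)⋯(X_j-ℓ-m+1)/m!`. -/
noncomputable def pbinom {k : ℕ} (j : Fin k) (ℓ m : ℕ) : MvPolynomial (Fin k) ℚ :=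
  MvPolynomial.C ((m.factorial : ℚ)⁻¹) *
    ∏ t ∈ Finset.range m,
      (MvPolynomial.X j - MvPolynomial.C (ℓ : ℚ) - MvPolynomial.C (t : ℚ))

/-- Integer binomial polynomial: a ℤ-linear combination of products of
binomial monomials. -/
def IsIntBinomPoly {k : ℕ} (P : MvPolynomial (Fin k) ℚ) : Prop :=
  ∃ (n : ℕ) (c : Fin n → ℤ) (a b : Fin n → Fin k → ℕ),
    P = ∑ i, MvPolynomial.C (c i : ℚ) * ∏ j, pbinom j (a i j) (b i j)

/-- Natural binomial polynomial: an ℕ-linear combination of products of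
binomial monomials. -/
def IsNatBinomPoly {k : ℕ} (P : MvPolynomial (Fin k) ℚ) : Prop :=
  ∃ (n : ℕ) (c : Fin n → ℕ) (a b : Fin n → Fin k → ℕ),
    P = ∑ i, MvPolynomial.C (c i : ℚ) * ∏ j, pbinom j (a i j) (b i j)

/-- Strongly natural binomial polynomial: every partial substitution of
natural numbers yields a natural binomial polynomial. -/
def IsStrongNatBinomPoly {k : ℕ} (P : MvPolynomial (Fin k) ℚ) : Prop :=
  ∀ ν : Fin k → Option ℕ, IsNatBinomPoly (restrictQ ν P)

/-- Ultimately polynomial. -/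
def UltimatelyPoly {A : Type} (f : List A → ℤ) : Prop :=
  ∃ N₀ : ℕ, ∀ (p : ℕ) (q : (Fin p → ℕ) → List A), IsPumping q →
    ∃ P : MvPolynomial (Fin p) ℚ, ∀ x : Fin p → ℕ, (∀ i, N₀ ≤ x i) →
      (f (q x) : ℚ) = MvPolynomial.eval (fun i => (x i : ℚ)) P

/-- `(k,ℕ)`-combinatorial. -/
def Combinatorial {A : Type} (k : ℕ) (f : List A → ℤ) : Prop :=
  ∃ ω : ℕ, ∀ q : (Fin k → ℕ) → List A, IsPumping q →
    ∃ P : MvPolynomial (Fin k) ℚ, IsStrongNatBinomPoly P ∧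
      ∀ x : Fin k → ℕ, (∀ i, 1 ≤ x i) →
        (f (q (fun i => ω * x i)) : ℚ) = MvPolynomial.eval (fun i => (x i : ℚ)) P


/-- The sum of the maximal monomials of `P`. -/
noncomputable def maxPart {k : ℕ} (P : MvPolynomial (Fin k) ℤ) :
    MvPolynomial (Fin k) ℤ :=
  ∑ α ∈ P.support.filter (fun α => ∀ β ∈ P.support, α ≤ β → β = α),
    MvPolynomial.monomial α (P.coeff α)


section Aux
open MvPolynomial Finset
variable {k : ℕ}

lemma nat_choose_le_two_pow (n j : ℕ) : n.choose j ≤ 2 ^ n := by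
  rcases le_or_gt j n with hj | hj
  · calc n.choose j ≤ ∑ m ∈ Finset.range (n+1), n.choose m :=
        Finset.single_le_sum (fun m _ => Nat.zero_le _) (Finset.mem_range.mpr (by omega))
    _ = 2 ^ n := Nat.sum_range_choose n
  · simp [Nat.choose_eq_zero_of_lt hj]

lemma X_add_C_pow_eq (i : Fin k) (c : ℤ) (n : ℕ) :
    (X i + C c : MvPolynomial (Fin k) ℤ) ^ n =
      ∑ j ∈ Finset.range (n + 1),
        monomial (Finsupp.single i j) ((n.choose j : ℤ) * c ^ (n - j)) := by
  rw [add_pow]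
  refine Finset.sum_congr rfl fun j hj => ?_
  rw [X_pow_eq_monomial, ← C_pow, ← C_eq_coe_nat, mul_assoc, ← C_mul, mul_comm,
    C_mul_monomial]
  congr 1
  ring

lemma coeff_prod_X_add_C_pow (c : ℤ) (β : Fin k → ℕ) (s : Finset (Fin k)) (α : Fin k →₀ ℕ) :
    (∏ i ∈ s, (X i + C c : MvPolynomial (Fin k) ℤ) ^ β i).coeff α =
      if ∀ i ∉ s, α i = 0 then
        ∏ i ∈ s, (((β i).choose (α i) : ℤ) * c ^ (β i - α i))
      else 0 := by
  classical
  induction s using Finset.induction generalizing α with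
  | empty =>
    simp only [Finset.prod_empty]
    by_cases h : α = 0
    · subst h; simp
    · rw [if_neg, MvPolynomial.coeff_one, if_neg]
      · exact fun h0 => h h0.symm
      · intro hall
        exact h (Finsupp.ext fun i => hall i (Finset.notMem_empty i))
  | insert _ _ ha ih =>
    rename_i a s
    rw [Finset.prod_insert ha, X_add_C_pow_eq, Finset.sum_mul, MvPolynomial.coeff_sum]
    have hterm : ∀ j, ((monomial (Finsupp.single a j) ((Nat.choose (β a) j : ℤ) * c ^ (β a - j)) *
        ∏ i ∈ s, (X i + C c : MvPolynomial (Fin k) ℤ) ^ β i).coeff α) =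
        if Finsupp.single a j ≤ α then
          ((Nat.choose (β a) j : ℤ) * c ^ (β a - j)) *
            (∏ i ∈ s, (X i + C c : MvPolynomial (Fin k) ℤ) ^ β i).coeff (α - Finsupp.single a j)
        else 0 := fun j => MvPolynomial.coeff_monomial_mul' α _ _ _
    by_cases hC : ∀ i ∉ insert a s, α i = 0
    · rw [if_pos hC]
      by_cases hab : α a ≤ β a
      · rw [Finset.sum_eq_single (α a)]
        · rw [hterm, if_pos (Finsupp.single_le_iff.mpr le_rfl), ih, if_pos, Finset.prod_insert ha]
          · congr 1
            refine Finset.prod_congr rfl fun i hi => ?_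
            have hia : i ≠ a := fun h => ha (h ▸ hi)
            rw [Finsupp.tsub_apply, Finsupp.single_apply, if_neg (Ne.symm hia), Nat.sub_zero]
          · intro i hi
            rw [Finsupp.tsub_apply, Finsupp.single_apply]
            by_cases hia : a = i
            · subst hia; simp
            · rw [if_neg hia, Nat.sub_zero]
              exact hC i (by simp [hi, Ne.symm hia])
        · intro j hj hne
          rw [hterm]
          by_cases hle : Finsupp.single a j ≤ α
          · rw [if_pos hle, ih, if_neg, mul_zero]
            push_neg
            refine ⟨a, ha, ?_⟩
            rw [Finsupp.tsub_apply, Finsupp.single_apply, if_pos rfl]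
            have : j ≤ α a := Finsupp.single_le_iff.mp hle
            omega
          · rw [if_neg hle]
        · intro hmem
          exact absurd (Finset.mem_range.mpr (by omega)) hmem
      · rw [Finset.prod_insert ha]
        have h0 : ((Nat.choose (β a) (α a) : ℤ)) = 0 := by
          rw [Nat.choose_eq_zero_of_lt (by omega)]; exact Int.natCast_zero
        rw [Finset.sum_eq_zero, h0]
        · ring
        · intro j hj
          rw [hterm]
          have hjb : j ≤ β a := by
            have := Finset.mem_range.mp hj; omega
          by_cases hle : Finsupp.single a j ≤ α
          · rw [if_pos hle, ih, if_neg, mul_zero]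
            push_neg
            refine ⟨a, ha, ?_⟩
            rw [Finsupp.tsub_apply, Finsupp.single_apply, if_pos rfl]
            have : j ≤ α a := Finsupp.single_le_iff.mp hle
            omega
          · rw [if_neg hle]
    · rw [if_neg hC, Finset.sum_eq_zero]
      intro j hj
      rw [hterm]
      push_neg at hC
      obtain ⟨i0, hi0, hα0⟩ := hC
      by_cases hle : Finsupp.single a j ≤ α
      · rw [if_pos hle, ih, if_neg, mul_zero]
        push_neg
        refine ⟨i0, fun h => hi0 (Finset.mem_insert_of_mem h), ?_⟩
        have hia : i0 ≠ a := fun h => hi0 (h ▸ Finset.mem_insert_self a s)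
        rw [Finsupp.tsub_apply, Finsupp.single_apply, if_neg (Ne.symm hia), Nat.sub_zero]
        exact hα0
      · rw [if_neg hle]


lemma coeff_translate (K : ℕ) (P : MvPolynomial (Fin k) ℤ) (α : Fin k →₀ ℕ) :
    (translate K P).coeff α =
      ∑ β ∈ P.support, P.coeff β *
        ((∏ i, ((β i).choose (α i) : ℤ)) * (K : ℤ) ^ (∑ i, (β i - α i))) := by
  classical
  conv_lhs => rw [translate, P.as_sum, map_sum, MvPolynomial.coeff_sum]
  refine Finset.sum_congr rfl fun β hβ => ?_
  rw [bind₁_monomial]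
  have hprod : (∏ i ∈ β.support, (X i + C (K:ℤ) : MvPolynomial (Fin k) ℤ) ^ β i) =
      ∏ i : Fin k, (X i + C (K:ℤ) : MvPolynomial (Fin k) ℤ) ^ β i := by
    refine Finset.prod_subset (Finset.subset_univ _) fun i _ hi => ?_
    rw [Finsupp.notMem_support_iff.mp hi, pow_zero]
  rw [hprod, MvPolynomial.coeff_C_mul, coeff_prod_X_add_C_pow,
    if_pos (fun i hi => absurd (Finset.mem_univ i) hi)]
  rw [Finset.prod_mul_distrib, Finset.prod_pow_eq_pow_sum]

lemma coeff_maxPart (P : MvPolynomial (Fin k) ℤ) (α : Fin k →₀ ℕ) :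
    (maxPart P).coeff α =
      if α ∈ P.support ∧ ∀ β ∈ P.support, α ≤ β → β = α then P.coeff α else 0 := by
  classical
  rw [maxPart, MvPolynomial.coeff_sum]
  rw [Finset.sum_congr rfl (fun β _ => MvPolynomial.coeff_monomial α β (P.coeff β)),
    Finset.sum_ite_eq' _ α (fun β => P.coeff β)]
  simp only [Finset.mem_filter]

lemma coeff_nonneg_of_max (P : MvPolynomial (Fin k) ℤ) (h : PolyStrNNeg P)
    (α : Fin k →₀ ℕ) (hα : α ∈ P.support) (hmax : ∀ β ∈ P.support, α ≤ β → β = α) :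
    0 < P.coeff α := by
  have hid : restrict (fun _ => none) P = P := by
    rw [restrict]
    have : (fun i : Fin k => (none : Option ℕ).elim (MvPolynomial.X i)
        (fun n => MvPolynomial.C (n : ℤ))) = MvPolynomial.X := rfl
    rw [this, MvPolynomial.bind₁_X_left, AlgHom.id_apply]
  have := h (fun _ => none) α (by rw [hid]; exact ⟨hα, hmax⟩)
  rw [hid] at this
  exact lt_of_le_of_ne this (Ne.symm (MvPolynomial.mem_support_iff.mp hα))

lemma finsupp_eq_of_le_of_sum_le {β γ : Fin k →₀ ℕ} (hle : β ≤ γ)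
    (hsum : (∑ i, γ i) ≤ ∑ i, β i) : γ = β := by
  classical
  by_contra hne
  have hlt : ∃ j ∈ Finset.univ, β j < γ j := by
    by_contra hall
    push_neg at hall
    exact hne (Finsupp.ext fun i => le_antisymm (hall i (Finset.mem_univ i)) (hle i))
  have := Finset.sum_lt_sum (fun i _ => hle i) hlt
  omega

end Aux

set_option maxHeartbeats 1000000 in
/-- for `P ∈ PolyStrNNeg`, with `P₁` the sum of its maximal
monomials and `P₂ = P - P₁`, there is `K` such that
`Δ_K(P₁) + τ_K(P₂) ∈ ℕ[X₁,…,X_k]`. -/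
theorem statement5 {k : ℕ} (P : MvPolynomial (Fin k) ℤ) (h : PolyStrNNeg P) :
    ∃ K : ℕ, ∀ α : Fin k →₀ ℕ,
      0 ≤ (delta K (maxPart P) + translate K (P - maxPart P)).coeff α := by
  classical
  set Cb : ℕ := P.support.sup fun β => (P.coeff β).natAbs with hCb
  set Nb : ℕ := 2 ^ P.totalDegree with hNb
  refine ⟨P.support.card * Cb * Nb + 1, fun α => ?_⟩
  set K : ℕ := P.support.card * Cb * Nb + 1 with hK
  have hexp : delta K (maxPart P) + translate K (P - maxPart P)
      = translate K P - maxPart P := by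
    rw [delta, translate, translate, translate, map_sub]
    ring
  rw [hexp, MvPolynomial.coeff_sub, coeff_maxPart]
  by_cases hmax : α ∈ P.support ∧ ∀ β ∈ P.support, α ≤ β → β = α
  · rw [if_pos hmax, coeff_translate]
    rw [Finset.sum_eq_single_of_mem α hmax.1]
    · simp [Nat.choose_self]
    · intro β hβ hne
      by_cases hle : α ≤ β
      · exact absurd (hmax.2 β hβ hle) hne
      · obtain ⟨i, hi⟩ : ∃ i, ¬ α i ≤ β i := by
          by_contra hc; push_neg at hc; exact hle (Finsupp.le_def.mpr hc)
        have h0 : ((β i).choose (α i) : ℤ) = 0 := by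
          rw [Nat.choose_eq_zero_of_lt (by omega)]; exact Int.natCast_zero
        rw [Finset.prod_eq_zero (Finset.mem_univ i) h0]
        ring
  · rw [if_neg hmax, sub_zero, coeff_translate]
    set f : (Fin k →₀ ℕ) → ℤ := fun β => P.coeff β *
        ((∏ i, ((β i).choose (α i) : ℤ)) * (K : ℤ) ^ (∑ i, (β i - α i))) with hf
    set S := P.support.filter (fun β => α ≤ β) with hS
    have hsum : ∑ β ∈ P.support, f β = ∑ β ∈ S, f β := by
      refine (Finset.sum_filter_of_ne fun β hβ hne => ?_).symm
      by_contra hle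
      obtain ⟨i, hi⟩ : ∃ i, ¬ α i ≤ β i := by
        by_contra hc; push_neg at hc; exact hle (Finsupp.le_def.mpr hc)
      refine hne ?_
      have h0 : ((β i).choose (α i) : ℤ) = 0 := by
        rw [Nat.choose_eq_zero_of_lt (by omega)]; exact Int.natCast_zero
      simp only [hf]
      rw [Finset.prod_eq_zero (Finset.mem_univ i) h0]
      ring
    rw [hsum]
    rcases S.eq_empty_or_nonempty with hE | hne
    · rw [hE, Finset.sum_empty]
    set d := S.sup (fun β => ∑ i, β i) with hd
    set m := ∑ i, α i with hm
    obtain ⟨β₀, hβ₀S, hβ₀d⟩ := Finset.exists_mem_eq_sup S hne (fun β => ∑ i, β i)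
    have hkeymax : ∀ β ∈ S, (∑ i, β i) = d →
        (β ∈ P.support ∧ ∀ γ ∈ P.support, β ≤ γ → γ = β) := by
      intro β hβ hdeg
      obtain ⟨hβsupp, hαβ⟩ := Finset.mem_filter.mp hβ
      refine ⟨hβsupp, fun γ hγ hβγ => ?_⟩
      have hγS : γ ∈ S := Finset.mem_filter.mpr ⟨hγ, le_trans hαβ hβγ⟩
      have hγd : (∑ i, γ i) ≤ d := Finset.le_sup (f := fun β => ∑ i, β i) hγS
      exact finsupp_eq_of_le_of_sum_le hβγ (by omega)
    have hdm : m < d := by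
      have hαβ₀ : α ≤ β₀ := (Finset.mem_filter.mp hβ₀S).2
      have h1 : m ≤ ∑ i, β₀ i := Finset.sum_le_sum (fun i _ => hαβ₀ i)
      rcases eq_or_lt_of_le h1 with heq | hlt
      · exfalso
        have hba : β₀ = α := finsupp_eq_of_le_of_sum_le hαβ₀ heq.symm.le
        refine hmax ?_
        rw [← hba]
        exact hkeymax β₀ hβ₀S hβ₀d.symm
      · omega
    have hexpβ : ∀ β ∈ S, (∑ i, (β i - α i)) = (∑ i, β i) - m := by
      intro β hβ
      exact Finset.sum_tsub_distrib _ (fun i _ => ((Finset.mem_filter.mp hβ).2) i)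
    have hK1' : 1 ≤ K := by omega
    have hK1 : (1 : ℤ) ≤ (K : ℤ) := by exact_mod_cast hK1'
    -- split top-degree and rest
    rw [← Finset.sum_filter_add_sum_filter_not S (fun β => (∑ i, β i) = d) f]
    set B : ℤ := (Cb : ℤ) * (Nb : ℤ) * (K : ℤ) ^ (d - 1 - m) with hB
    have htop : ((K : ℤ)) ^ (d - m) ≤ ∑ β ∈ S.filter (fun β => (∑ i, β i) = d), f β := by
      have hterm : ∀ β ∈ S.filter (fun β => (∑ i, β i) = d), (K : ℤ) ^ (d - m) ≤ f β := by
        intro β hβ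
        obtain ⟨hβS, hβd⟩ := Finset.mem_filter.mp hβ
        have hc : 1 ≤ P.coeff β := by
          have := coeff_nonneg_of_max P h β (hkeymax β hβS hβd).1 (hkeymax β hβS hβd).2
          omega
        have hn : (1 : ℤ) ≤ ∏ i, ((β i).choose (α i) : ℤ) := by
          rw [← Nat.cast_prod]
          have : 0 < ∏ i, (β i).choose (α i) := by
            refine Finset.prod_pos fun i _ => Nat.choose_pos ?_
            exact ((Finset.mem_filter.mp hβS).2) i
          exact_mod_cast this
        have he : (∑ i, (β i - α i)) = d - m := by rw [hexpβ β hβS, hβd]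
        simp only [hf]
        rw [he]
        have hKp : (0:ℤ) ≤ (K : ℤ) ^ (d - m) := pow_nonneg (Int.natCast_nonneg K) _
        calc (K:ℤ)^(d-m) = 1 * (K:ℤ)^(d-m) := by ring
          _ ≤ (P.coeff β * ∏ i, ((β i).choose (α i):ℤ)) * (K:ℤ)^(d-m) := by
              refine mul_le_mul_of_nonneg_right ?_ hKp
              nlinarith
          _ = P.coeff β * ((∏ i, ((β i).choose (α i):ℤ)) * (K:ℤ)^(d-m)) := by ring
      calc (K : ℤ) ^ (d - m) ≤ f β₀ :=
            hterm β₀ (Finset.mem_filter.mpr ⟨hβ₀S, hβ₀d.symm⟩)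
        _ ≤ ∑ β ∈ S.filter (fun β => (∑ i, β i) = d), f β := by
            refine Finset.single_le_sum (fun β hβ => ?_)
              (Finset.mem_filter.mpr ⟨hβ₀S, hβ₀d.symm⟩)
            have h0 : (0:ℤ) ≤ (K:ℤ)^(d-m) := pow_nonneg (Int.natCast_nonneg K) _
            exact le_trans h0 (hterm β hβ)
    have hrest : -(((P.support.card : ℤ)) * B) ≤
        ∑ β ∈ S.filter (fun β => ¬ (∑ i, β i) = d), f β := by
      have hterm : ∀ β ∈ S.filter (fun β => ¬ (∑ i, β i) = d), -B ≤ f β := by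
        intro β hβ
        obtain ⟨hβS, hβd⟩ := Finset.mem_filter.mp hβ
        obtain ⟨hβsupp, hαβ⟩ := Finset.mem_filter.mp hβS
        have hcb : |P.coeff β| ≤ (Cb : ℤ) := by
          have h1 : (P.coeff β).natAbs ≤ Cb := Finset.le_sup (f := fun β => (P.coeff β).natAbs) hβsupp
          rw [Int.abs_eq_natAbs]
          exact_mod_cast h1
        have hnb : (∏ i, ((β i).choose (α i) : ℤ)) ≤ (Nb : ℤ) := by
          rw [← Nat.cast_prod]
          have h1 : (∏ i, (β i).choose (α i)) ≤ ∏ i, 2 ^ (β i) :=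
            Finset.prod_le_prod (fun i _ => Nat.zero_le _)
              (fun i _ => nat_choose_le_two_pow _ _)
          have h2 : (∏ i : Fin k, 2 ^ (β i)) = 2 ^ (∑ i, β i) :=
            Finset.prod_pow_eq_pow_sum _ _ _
          have h3 : (∑ i, β i) ≤ P.totalDegree := by
            have := MvPolynomial.le_totalDegree hβsupp
            rwa [Finsupp.sum_fintype _ _ (fun i => rfl)] at this
          have h4 : (2:ℕ) ^ (∑ i, β i) ≤ Nb := Nat.pow_le_pow_right (by norm_num) h3
          exact_mod_cast le_trans h1 (h2 ▸ h4)
        have hn0 : (0 : ℤ) ≤ ∏ i, ((β i).choose (α i) : ℤ) := by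
          rw [← Nat.cast_prod]; exact Int.natCast_nonneg _
        have he : (∑ i, (β i - α i)) ≤ d - 1 - m := by
          rw [hexpβ β hβS]
          have h1 : (∑ i, β i) ≤ d := Finset.le_sup (f := fun β => ∑ i, β i) hβS
          omega
        have hKe : (K : ℤ) ^ (∑ i, (β i - α i)) ≤ (K : ℤ) ^ (d - 1 - m) :=
          pow_le_pow_right₀ hK1 he
        have hKe0 : (0:ℤ) ≤ (K : ℤ) ^ (∑ i, (β i - α i)) := pow_nonneg (Int.natCast_nonneg K) _
        simp only [hf]
        have habs : |P.coeff β * ((∏ i, ((β i).choose (α i) : ℤ)) *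
            (K : ℤ) ^ (∑ i, (β i - α i)))| ≤ B := by
          rw [abs_mul, abs_mul, abs_of_nonneg hn0, abs_of_nonneg hKe0]
          have hCb0 : (0:ℤ) ≤ (Cb:ℤ) := Int.natCast_nonneg _
          have hNb0 : (0:ℤ) ≤ (Nb:ℤ) := Int.natCast_nonneg _
          calc |P.coeff β| * ((∏ i, ((β i).choose (α i):ℤ)) * (K:ℤ) ^ (∑ i, (β i - α i)))
              ≤ (Cb:ℤ) * ((∏ i, ((β i).choose (α i):ℤ)) * (K:ℤ) ^ (∑ i, (β i - α i))) :=
                mul_le_mul_of_nonneg_right hcb (mul_nonneg hn0 hKe0)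
            _ ≤ (Cb:ℤ) * ((Nb:ℤ) * (K:ℤ) ^ (∑ i, (β i - α i))) :=
                mul_le_mul_of_nonneg_left (mul_le_mul_of_nonneg_right hnb hKe0) hCb0
            _ ≤ (Cb:ℤ) * ((Nb:ℤ) * (K:ℤ) ^ (d - 1 - m)) :=
                mul_le_mul_of_nonneg_left (mul_le_mul_of_nonneg_left hKe hNb0) hCb0
            _ = B := by rw [hB]; ring
        linarith [neg_abs_le (P.coeff β * ((∏ i, ((β i).choose (α i) : ℤ)) *
            (K : ℤ) ^ (∑ i, (β i - α i)))), habs]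
      have hcard : ((S.filter (fun β => ¬ (∑ i, β i) = d)).card : ℤ) ≤ (P.support.card : ℤ) := by
        have h1 : (S.filter (fun β => ¬ (∑ i, β i) = d)).card ≤ S.card :=
          Finset.card_filter_le _ _
        have h2 : S.card ≤ P.support.card := Finset.card_filter_le _ _
        exact_mod_cast le_trans h1 h2
      have hnsmul := Finset.card_nsmul_le_sum (S.filter (fun β => ¬ (∑ i, β i) = d)) f (-B) hterm
      rw [nsmul_eq_mul, mul_neg] at hnsmul
      have hB0 : (0:ℤ) ≤ B := by
        rw [hB]
        exact mul_nonneg (mul_nonneg (Int.natCast_nonneg _) (Int.natCast_nonneg _)) (pow_nonneg (Int.natCast_nonneg K) _)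
      have hmono := mul_le_mul_of_nonneg_right hcard hB0
      linarith
    have hfinal : 0 ≤ ((K : ℤ)) ^ (d - m) - ((P.support.card : ℤ)) * B := by
      have hdm1 : d - m = (d - 1 - m) + 1 := by omega
      rw [hdm1, pow_succ']
      have hKp : (0:ℤ) ≤ (K : ℤ) ^ (d - 1 - m) := pow_nonneg (Int.natCast_nonneg K) _
      have hKval : (K : ℤ) = (P.support.card : ℤ) * Cb * Nb + 1 := by
        rw [hK]; push_cast; ring
      have hBval : ((P.support.card : ℤ)) * B = ((K:ℤ) - 1) * (K:ℤ)^(d-1-m) := by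
        rw [hB, hKval]; ring
      rw [hBval]
      have h2 : (K:ℤ)*(K:ℤ)^(d-1-m) - ((K:ℤ)-1)*(K:ℤ)^(d-1-m) = (K:ℤ)^(d-1-m) := by ring
      linarith
    linarith

end NRatSeries
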